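/- Let c_1, …, c_T ∈ ℝ^d be fixed vectors with mean ω := (1/T) Σ_{i=1}^T c_i, and let π be a uniformly random permutation of {1,…,T}. Then: (i) for every t and every realization of π, the conditional expectation E[ c_{π(t)} | π(1),…,π(t−1) ] equals (1/(T−t+1)) Σ_{i ∉ {π(1),…,π(t−1)}} c_i, the average of the not-yet-revealed vectors; and (ii) E[ Σ_{t=1}^T ‖ E[ c_{π(t)} | π(1),…,π(t−1) ] − ω ‖ ] = E[ Σ_{t=1}^T ‖ (1/t) Σ_{i=1}^t c_{π(i)} − ω ‖ ], i.e. the total conditional-mean drift in the random permutation model equals in expectation the total deviation of prefix averages of a uniformly random permutation. -/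

import Mathlib

open Finset

noncomputable section

/-- Dot product on `ℝ^d`. -/
def dotp {d : ℕ} (x y : Fin d → ℝ) : ℝ := ∑ i, x i * y i

/-- The unit cube `[0,1]^d`. -/
def cube (d : ℕ) : Set (Fin d → ℝ) := Set.Icc 0 1

/-- `nrm` is a norm on `ℝ^d`. -/
structure IsNorm {d : ℕ} (nrm : (Fin d → ℝ) → ℝ) : Prop where
  eq_zero_iff : ∀ x, nrm x = 0 ↔ x = 0
  smul_eq : ∀ (a : ℝ) (x : Fin d → ℝ), nrm (a • x) = |a| * nrm x
  add_le : ∀ x y, nrm (x + y) ≤ nrm x + nrm y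

/-- Dual norm of `nrm`. -/
def dualNorm {d : ℕ} (nrm : (Fin d → ℝ) → ℝ) (y : Fin d → ℝ) : ℝ :=
  sSup {r | ∃ x, nrm x ≤ 1 ∧ r = dotp x y}

/-- Distance from `x` to the set `S`, w.r.t. the norm `nrm`. -/
def distN {d : ℕ} (nrm : (Fin d → ℝ) → ℝ) (S : Set (Fin d → ℝ)) (x : Fin d → ℝ) : ℝ :=
  sInf ((fun y => nrm (x - y)) '' S)

/-- Support function of `S`. -/
def suppF {d : ℕ} (S : Set (Fin d → ℝ)) (θ : Fin d → ℝ) : ℝ :=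
  sSup ((fun y => dotp θ y) '' S)

/-- All-ones vector in `ℝ^d`. -/
def ones (d : ℕ) : Fin d → ℝ := fun _ => 1

/-- Expectation of a real quantity over a uniformly random permutation of `{0,…,T-1}`. -/
def pexp (T : ℕ) (F : Equiv.Perm (Fin T) → ℝ) : ℝ :=
  (∑ π : Equiv.Perm (Fin T), F π) / (Fintype.card (Equiv.Perm (Fin T)) : ℝ)

/-- Expectation of a vector quantity over a uniformly random permutation. -/
def pexpV (T d : ℕ) (F : Equiv.Perm (Fin T) → (Fin d → ℝ)) : Fin d → ℝ :=
  (Fintype.card (Equiv.Perm (Fin T)) : ℝ)⁻¹ • ∑ π : Equiv.Perm (Fin T), F π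

open scoped Classical in
/-- Probability of an event under a uniformly random permutation. -/
def pprob (T : ℕ) (E : Equiv.Perm (Fin T) → Prop) : ℝ :=
  ((Finset.univ.filter E).card : ℝ) / (Fintype.card (Equiv.Perm (Fin T)) : ℝ)

open scoped Classical in
/-- Permutations agreeing with `π` on the first `t` positions. -/
def agreeSet {T : ℕ} (t : ℕ) (π : Equiv.Perm (Fin T)) : Finset (Equiv.Perm (Fin T)) :=
  Finset.univ.filter (fun σ => ∀ s : Fin T, (s : ℕ) < t → σ s = π s)

/-- Conditional expectation given the first `t` positions of the permutation. -/
def condE {T : ℕ} (F : Equiv.Perm (Fin T) → ℝ) (t : ℕ) (π : Equiv.Perm (Fin T)) : ℝ :=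
  (∑ σ ∈ agreeSet t π, F σ) / ((agreeSet t π).card : ℝ)

/-- Vector-valued conditional expectation given the first `t` positions. -/
def condEV {T d : ℕ} (F : Equiv.Perm (Fin T) → (Fin d → ℝ)) (t : ℕ)
    (π : Equiv.Perm (Fin T)) : Fin d → ℝ :=
  (((agreeSet t π).card : ℝ))⁻¹ • ∑ σ ∈ agreeSet t π, F σ

/-- Sup norm on `ℝ^d`. -/
def supNorm {d : ℕ} (x : Fin d → ℝ) : ℝ := sSup {r | ∃ j, r = |x j|}


theorem part1_aux {T d : ℕ} (c : Fin T → Fin d → ℝ) (π : Equiv.Perm (Fin T)) (t : Fin T) :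
    condEV (fun σ => c (σ t)) (t : ℕ) π
      = ((T : ℝ) - ((t : ℕ) : ℝ))⁻¹ •
          ∑ i ∈ Finset.univ.filter
            (fun i : Fin T => ∀ s : Fin T, (s : ℕ) < (t : ℕ) → π s ≠ i), c i := by
  classical
  set A : Finset (Equiv.Perm (Fin T)) := agreeSet (t : ℕ) π with hA
  have hAmem : ∀ σ : Equiv.Perm (Fin T), σ ∈ A ↔ ∀ s : Fin T, (s : ℕ) < (t : ℕ) → σ s = π s := by
    intro σ; rw [hA, agreeSet, Finset.mem_filter]; simp
  set U : Finset (Fin T) :=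
    Finset.univ.filter (fun i : Fin T => ∀ s : Fin T, (s : ℕ) < (t : ℕ) → π s ≠ i) with hU
  set m := (A.filter (fun σ => σ t = π t)).card with hm
  have hπA : π ∈ A := by rw [hAmem]; intro s _; rfl
  have hπtU : π t ∈ U := by
    simp only [hU, mem_filter, mem_univ, true_and]
    intro s hs he
    exact absurd (π.injective he) (by intro h; rw [h] at hs; omega)
  have hfib : ∀ i ∈ U, (A.filter (fun σ => σ t = i)).card = m := by
    have key : ∀ i ∈ U, ∀ j ∈ U,
        (A.filter (fun σ => σ t = i)).card ≤ (A.filter (fun σ => σ t = j)).card := by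
      intro i hi j hj
      simp only [hU, mem_filter, mem_univ, true_and] at hi hj
      apply Finset.card_le_card_of_injOn (fun σ => Equiv.swap i j * σ)
      · intro σ hσ
        simp only [Finset.mem_coe, mem_filter] at hσ ⊢
        obtain ⟨h1, h2⟩ := hσ
        rw [hAmem] at h1
        refine ⟨?_, ?_⟩
        · rw [hAmem]
          intro s hs
          simp only [Equiv.Perm.mul_apply, h1 s hs]
          exact Equiv.swap_apply_of_ne_of_ne (hi s hs) (hj s hs)
        · simp [Equiv.Perm.mul_apply, h2]
      · intro a _ b _ h
        have := congrArg (fun σ => (Equiv.swap i j)⁻¹ * σ) h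
        simpa [← mul_assoc] using this
    intro i hi
    exact le_antisymm (key i hi (π t) hπtU) (key (π t) hπtU i hi)
  have himg : A.image (fun σ => σ t) = U := by
    ext i
    simp only [mem_image, hU, mem_filter, mem_univ, true_and]
    constructor
    · rintro ⟨σ, hσ, rfl⟩
      rw [hAmem] at hσ
      intro s hs he
      rw [← hσ s hs] at he
      exact absurd (σ.injective he) (by intro h; rw [h] at hs; omega)
    · intro hi
      refine ⟨Equiv.swap (π t) i * π, ?_, ?_⟩
      · rw [hAmem]
        intro s hs
        simp only [Equiv.Perm.mul_apply]
        refine Equiv.swap_apply_of_ne_of_ne ?_ (hi s hs)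
        intro h
        exact absurd (π.injective h) (by intro h'; rw [h'] at hs; omega)
      · simp [Equiv.Perm.mul_apply]
  have hsum : ∑ σ ∈ A, c (σ t) = (m : ℝ) • ∑ i ∈ U, c i := by
    have h := Finset.sum_comp (s := A) c (fun σ : Equiv.Perm (Fin T) => σ t)
    rw [himg] at h
    rw [h, Finset.smul_sum]
    refine Finset.sum_congr rfl fun i hi => ?_
    rw [hfib i hi, Nat.cast_smul_eq_nsmul]
  have hcard : A.card = U.card * m := by
    rw [Finset.card_eq_sum_card_fiberwise (f := fun σ => σ t) (t := U)
      (fun σ hσ => himg ▸ Finset.mem_image_of_mem _ hσ)]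
    rw [Finset.sum_congr rfl hfib, Finset.sum_const, smul_eq_mul]
  have hUcard : U.card = T - (t : ℕ) := by
    have hcomp : Uᶜ = Finset.image π (Finset.Iio t) := by
      ext i
      rw [Finset.mem_compl, hU, Finset.mem_filter]
      push_neg
      simp only [mem_univ, true_implies, true_and, Finset.mem_image, Finset.mem_Iio, not_not]
      constructor
      · rintro ⟨s, hs, he⟩; exact ⟨s, Fin.lt_def.mpr hs, he⟩
      · rintro ⟨s, hs, he⟩; exact ⟨s, Fin.lt_def.mp hs, he⟩
    have h1 : Uᶜ.card = (t : ℕ) := by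
      rw [hcomp, Finset.card_image_of_injective _ π.injective, Fin.card_Iio]
    have h2 : (t : ℕ) = T - U.card := by
      rw [← h1, Finset.card_compl, Fintype.card_fin]
    have h3 : U.card ≤ T := by
      simpa using Finset.card_le_univ U
    omega
  have hm0 : m ≠ 0 := by
    have hmem : π ∈ A.filter (fun σ => σ t = π t) := by
      rw [Finset.mem_filter]; exact ⟨hπA, rfl⟩
    have := Finset.card_pos.mpr ⟨π, hmem⟩
    omega
  have hcast : ((U.card : ℕ) : ℝ) = (T : ℝ) - ((t : ℕ) : ℝ) := by
    rw [hUcard, Nat.cast_sub (le_of_lt t.is_lt)]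
  rw [condEV]
  show ((A.card : ℝ))⁻¹ • ∑ σ ∈ A, c (σ t) = _
  rw [hsum, hcard, smul_smul, Nat.cast_mul, hcast]
  have hTt : (T : ℝ) - ((t : ℕ) : ℝ) ≠ 0 := by
    have h := t.is_lt
    have h2 : ((t : ℕ) : ℝ) < (T : ℝ) := by exact_mod_cast h
    linarith
  have hmR : (m : ℝ) ≠ 0 := Nat.cast_ne_zero.mpr hm0
  congr 1
  rw [mul_inv, mul_assoc, inv_mul_cancel₀ hmR, mul_one]

theorem filter_rev_aux {T : ℕ} (π : Equiv.Perm (Fin T)) (u : Fin T) :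
    Finset.univ.filter
        (fun i : Fin T => ∀ s : Fin T, (s : ℕ) < (u : ℕ) → (π * Fin.revPerm : Equiv.Perm (Fin T)) s ≠ i)
      = Finset.image π (Finset.univ.filter (fun j : Fin T => (j : ℕ) ≤ ((Fin.rev u : Fin T) : ℕ))) := by
  classical
  ext i
  simp only [Finset.mem_filter, Finset.mem_univ, true_and, Finset.mem_image,
    Equiv.Perm.mul_apply, Fin.revPerm_apply, Fin.val_rev]
  constructor
  · intro h
    refine ⟨π.symm i, ?_, π.apply_symm_apply i⟩
    by_contra hc
    push_neg at hc
    set j := π.symm i with hj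
    have hjT : (j : ℕ) < T := j.is_lt
    have huT : (u : ℕ) < T := u.is_lt
    have hlt : ((Fin.rev j : Fin T) : ℕ) < (u : ℕ) := by
      rw [Fin.val_rev]; omega
    have := h (Fin.rev j) hlt
    rw [Fin.rev_rev] at this
    exact this (π.apply_symm_apply i)
  · rintro ⟨j, hj, rfl⟩
    intro s hs he
    have h1 : Fin.rev s = j := π.injective he
    have h2 : ((Fin.rev s : Fin T) : ℕ) = (j : ℕ) := by rw [h1]
    rw [Fin.val_rev] at h2
    have hsT : (s : ℕ) < T := s.is_lt
    have huT : (u : ℕ) < T := u.is_lt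
    omega

theorem point_aux {T d : ℕ} (nrm : (Fin d → ℝ) → ℝ) (c : Fin T → Fin d → ℝ)
    (ω : Fin d → ℝ) (π : Equiv.Perm (Fin T)) :
    ∑ t : Fin T, nrm (condEV (fun σ => c (σ t)) (t : ℕ) (π * Fin.revPerm) - ω)
      = ∑ t : Fin T, nrm ((((t : ℕ) : ℝ) + 1)⁻¹ •
            ∑ i ∈ Finset.univ.filter (fun i : Fin T => (i : ℕ) ≤ (t : ℕ)), c (π i) - ω) := by
  classical
  rw [← Equiv.sum_comp (Fin.revPerm : Equiv.Perm (Fin T))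
    (fun t : Fin T => nrm ((((t : ℕ) : ℝ) + 1)⁻¹ •
      ∑ i ∈ Finset.univ.filter (fun i : Fin T => (i : ℕ) ≤ (t : ℕ)), c (π i) - ω))]
  refine Finset.sum_congr rfl fun u _ => ?_
  rw [part1_aux, filter_rev_aux]
  have huT : (u : ℕ) < T := u.is_lt
  have hinj : ∀ x ∈ Finset.univ.filter (fun j : Fin T => (j : ℕ) ≤ ((Fin.rev u : Fin T) : ℕ)),
      ∀ y ∈ Finset.univ.filter (fun j : Fin T => (j : ℕ) ≤ ((Fin.rev u : Fin T) : ℕ)),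
      π x = π y → x = y := fun x _ y _ h => π.injective h
  rw [Finset.sum_image hinj]
  have hcoef : ((T : ℝ) - ((u : ℕ) : ℝ)) = ((((Fin.rev u : Fin T) : ℕ) : ℝ) + 1) := by
    rw [Fin.val_rev]
    have : ((T - ((u : ℕ) + 1) : ℕ) : ℝ) = (T : ℝ) - ((u : ℕ) : ℝ) - 1 := by
      rw [Nat.cast_sub (by omega)]; push_cast; ring
    rw [this]; ring
  simp only [Fin.revPerm_apply]
  rw [hcoef]

theorem pexp_mulRight {T : ℕ} (F : Equiv.Perm (Fin T) → ℝ) (ρ : Equiv.Perm (Fin T)) :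
    pexp T F = pexp T (fun π => F (π * ρ)) := by
  unfold pexp
  congr 1
  exact (Equiv.sum_comp (Equiv.mulRight ρ) F).symm

/-- for fixed vectors `c_1,…,c_T` with mean `ω` and a uniformly random
permutation `π`: (i) the conditional expectation of `c_{π(t)}` given the first `t−1`
revealed positions is the average of the not-yet-revealed vectors; (ii) the expected
total conditional-mean drift equals the expected total deviation of prefix averages. -/
theorem stmt7
    (d : ℕ) (hd : 1 ≤ d) (nrm : (Fin d → ℝ) → ℝ) (hnrm : IsNorm nrm)
    (T : ℕ) (hT : 1 ≤ T)
    (c : Fin T → (Fin d → ℝ))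
    (ω : Fin d → ℝ) (hω : ω = (T : ℝ)⁻¹ • ∑ i : Fin T, c i) :
    (∀ (π : Equiv.Perm (Fin T)) (t : Fin T),
      condEV (fun σ => c (σ t)) (t : ℕ) π
        = ((T : ℝ) - ((t : ℕ) : ℝ))⁻¹ •
            ∑ i ∈ Finset.univ.filter
              (fun i : Fin T => ∀ s : Fin T, (s : ℕ) < (t : ℕ) → π s ≠ i), c i) ∧
    pexp T (fun π => ∑ t : Fin T,
        nrm (condEV (fun σ => c (σ t)) (t : ℕ) π - ω))
      = pexp T (fun π => ∑ t : Fin T,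
          nrm ((((t : ℕ) : ℝ) + 1)⁻¹ •
              ∑ i ∈ Finset.univ.filter (fun i : Fin T => (i : ℕ) ≤ (t : ℕ)), c (π i)
            - ω)) := by
  constructor
  · intro π t
    exact part1_aux c π t
  · rw [pexp_mulRight _ Fin.revPerm]
    unfold pexp
    congr 1
    exact Finset.sum_congr rfl fun π _ => point_aux nrm c ω π
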